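/- Let S be a random subset of a finite set E satisfying, for some caps q ∈ [0,1]^E: for every e ∈ E and every U ⊆ E∖{e} with P[S∖{e} = U] > 0, P[e ∈ S | S∖{e} = U] ≤ q_e. Let (C_e)_{e∈E} be independent Bernoulli variables with P[C_e = 1] = s_e ∈ [0,1], independent of S, and let R = {e ∈ S : C_e = 1}. Then for every e ∈ E, P[e ∈ R] = s_e · P[e ∈ S], and for every e ∈ E and every T ⊆ E∖{e} with P[R∖{e} = T] > 0, P[e ∈ R | R∖{e} = T] ≤ s_e · q_e. -/

import Mathlib

open Finset

private lemma aux_pow_one {E : Type*} [DecidableEq E] (s : E → ℝ) (B : Finset E) :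
    ∑ U ∈ B.powerset, (∏ f ∈ U, s f) * ∏ f ∈ B \ U, (1 - s f) = 1 := by
  rw [← Finset.prod_add]
  simp

theorem stmt_14 {E : Type*} [Fintype E] [DecidableEq E]
    -- μ is the law of the random subset S of E
    (μ : Finset E → ℝ)
    (h0 : ∀ A, 0 ≤ μ A)
    (hsum : (∑ A : Finset E, μ A) = 1)
    -- caps q: P[e ∈ S | S∖{e} = U] ≤ q_e
    (q : E → ℝ) (hq : ∀ e, 0 ≤ q e ∧ q e ≤ 1)
    (hcap : ∀ e : E, ∀ U : Finset E, e ∉ U → 0 < μ U + μ (insert e U) →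
      μ (insert e U) / (μ U + μ (insert e U)) ≤ q e)
    -- retention probabilities s
    (s : E → ℝ) (hs : ∀ e, 0 ≤ s e ∧ s e ≤ 1)
    -- ν is the law of R = {e ∈ S : C_e = 1}, the independent s-thinning of S
    (ν : Finset E → ℝ)
    (hν : ∀ T : Finset E, ν T = ∑ A ∈ univ.filter (fun A => T ⊆ A),
        μ A * ((∏ e ∈ T, s e) * ∏ e ∈ A \ T, (1 - s e))) :
    -- P[e ∈ R] = s_e · P[e ∈ S]
    (∀ e, ∑ T ∈ univ.filter (fun T => e ∈ T), ν T =
        s e * ∑ A ∈ univ.filter (fun A => e ∈ A), μ A) ∧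
    -- P[e ∈ R | R∖{e} = T] ≤ s_e · q_e
    (∀ e : E, ∀ T : Finset E, e ∉ T → 0 < ν T + ν (insert e T) →
      ν (insert e T) / (ν T + ν (insert e T)) ≤ s e * q e) := by
  constructor
  · -- Part 1
    intro e
    calc ∑ T ∈ univ.filter (fun T => e ∈ T), ν T
        = ∑ T ∈ univ.filter (fun T => e ∈ T), ∑ A ∈ univ.filter (fun A => T ⊆ A),
            μ A * ((∏ f ∈ T, s f) * ∏ f ∈ A \ T, (1 - s f)) :=
          sum_congr rfl (fun T _ => hν T)
      _ = ∑ A : Finset E, ∑ T ∈ univ.filter (fun T => e ∈ T ∧ T ⊆ A),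
            μ A * ((∏ f ∈ T, s f) * ∏ f ∈ A \ T, (1 - s f)) := by
          refine sum_comm' (fun T A => ?_)
          simp [and_comm]
      _ = ∑ A : Finset E, (if e ∈ A then s e * μ A else 0) := by
          refine sum_congr rfl (fun A _ => ?_)
          by_cases heA : e ∈ A
          · rw [if_pos heA]
            have hbij : ∑ T ∈ univ.filter (fun T => e ∈ T ∧ T ⊆ A),
                μ A * ((∏ f ∈ T, s f) * ∏ f ∈ A \ T, (1 - s f)) =
                ∑ U ∈ (A.erase e).powerset,
                μ A * (s e * ((∏ f ∈ U, s f) * ∏ f ∈ (A.erase e) \ U, (1 - s f))) := by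
              refine sum_nbij' (fun T => T.erase e) (fun U => insert e U) ?_ ?_ ?_ ?_ ?_
              · intro T hT
                simp only [mem_filter, mem_univ, true_and] at hT
                simp only [mem_powerset]
                intro x hx
                simp only [mem_erase] at hx ⊢
                exact ⟨hx.1, hT.2 hx.2⟩
              · intro U hU
                simp only [mem_powerset] at hU
                simp only [mem_filter, mem_univ, true_and, mem_insert, true_or, true_and]
                intro x hx
                rcases mem_insert.mp hx with h | h
                · exact h ▸ heA
                · exact (mem_erase.mp (hU h)).2
              · intro T hT
                simp only [mem_filter, mem_univ, true_and] at hT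
                exact insert_erase hT.1
              · intro U hU
                simp only [mem_powerset] at hU
                have : e ∉ U := fun h => (mem_erase.mp (hU h)).1 rfl
                exact erase_insert this
              · intro T hT
                simp only [mem_filter, mem_univ, true_and] at hT
                have heT : e ∈ T := hT.1
                have h1 : ∏ f ∈ T, s f = s e * ∏ f ∈ T.erase e, s f :=
                  (mul_prod_erase T s heT).symm
                have h2 : A \ T = (A.erase e) \ (T.erase e) := by
                  ext x
                  simp only [mem_sdiff, mem_erase]
                  constructor
                  · intro ⟨hxA, hxT⟩
                    exact ⟨⟨fun h => hxT (h ▸ heT), hxA⟩, fun h => hxT h.2⟩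
                  · intro ⟨⟨hxe, hxA⟩, hxT⟩
                    exact ⟨hxA, fun h => hxT ⟨hxe, h⟩⟩
                rw [h1, h2]
                ring
            rw [hbij, ← mul_sum]
            have : ∑ U ∈ (A.erase e).powerset,
                s e * ((∏ f ∈ U, s f) * ∏ f ∈ (A.erase e) \ U, (1 - s f)) =
                s e * ∑ U ∈ (A.erase e).powerset,
                  (∏ f ∈ U, s f) * ∏ f ∈ (A.erase e) \ U, (1 - s f) := by
              rw [mul_sum]
            rw [this, aux_pow_one]
            ring
          · rw [if_neg heA]
            apply sum_eq_zero
            intro T hT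
            simp only [mem_filter, mem_univ, true_and] at hT
            exact absurd (hT.2 hT.1) heA
      _ = s e * ∑ A ∈ univ.filter (fun A => e ∈ A), μ A := by
          rw [mul_sum, sum_filter]
  · -- Part 2
    intro e T heT hpos
    set P : ℝ := ∏ f ∈ T, s f with hP
    set F : Finset (Finset E) := univ.filter (fun B => T ⊆ B ∧ e ∉ B) with hF
    set w : Finset E → ℝ := fun B => ∏ f ∈ B \ T, (1 - s f) with hw
    have hwpos : ∀ B, 0 ≤ w B := fun B =>
      prod_nonneg (fun f _ => by linarith [(hs f).2])
    have hPpos : 0 ≤ P := prod_nonneg (fun f _ => (hs f).1)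
    have hse : 0 ≤ s e := (hs e).1
    have hqe : 0 ≤ q e := (hq e).1
    -- formula for ν (insert e T)
    have hν1 : ν (insert e T) = ∑ B ∈ F, μ (insert e B) * (s e * P * w B) := by
      rw [hν (insert e T)]
      refine sum_nbij' (fun A => A.erase e) (fun B => insert e B) ?_ ?_ ?_ ?_ ?_
      · intro A hA
        simp only [mem_filter, mem_univ, true_and] at hA
        simp only [hF, mem_filter, mem_univ, true_and]
        constructor
        · intro x hx
          exact mem_erase.mpr ⟨fun h => heT (h ▸ hx), hA (mem_insert_of_mem hx)⟩
        · simp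
      · intro B hB
        simp only [hF, mem_filter, mem_univ, true_and] at hB
        simp only [mem_filter, mem_univ, true_and]
        exact insert_subset_insert _ hB.1
      · intro A hA
        simp only [mem_filter, mem_univ, true_and] at hA
        exact insert_erase (hA (mem_insert_self e T))
      · intro B hB
        simp only [hF, mem_filter, mem_univ, true_and] at hB
        exact erase_insert hB.2
      · intro A hA
        simp only [mem_filter, mem_univ, true_and] at hA
        have heA : e ∈ A := hA (mem_insert_self e T)
        have h1 : insert e (A.erase e) = A := insert_erase heA
        have h2 : ∏ f ∈ insert e T, s f = s e * P := prod_insert heT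
        have h3 : A \ insert e T = (A.erase e) \ T := by
          ext x
          simp only [mem_sdiff, mem_insert, mem_erase, not_or]
          tauto
        rw [h1, h2, h3]
    -- formula for ν T
    have hν2 : ν T = ∑ B ∈ F, (μ B + (1 - s e) * μ (insert e B)) * (P * w B) := by
      rw [hν T]
      have hsplit : univ.filter (fun A => T ⊆ A) =
          (univ.filter (fun A => T ⊆ A)).filter (fun A => e ∈ A) ∪
          (univ.filter (fun A => T ⊆ A)).filter (fun A => e ∉ A) :=
        (filter_union_filter_not_eq _ _).symm
      rw [hsplit, sum_union (disjoint_filter_filter_not _ _ _)]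
      have hA2 : (univ.filter (fun A => T ⊆ A)).filter (fun A => e ∉ A) = F := by
        simp only [hF, filter_filter]
      have hpart2 : ∑ A ∈ (univ.filter (fun A => T ⊆ A)).filter (fun A => e ∉ A),
          μ A * ((∏ f ∈ T, s f) * ∏ f ∈ A \ T, (1 - s f)) =
          ∑ B ∈ F, μ B * (P * w B) := by rw [hA2]
      have hpart1 : ∑ A ∈ (univ.filter (fun A => T ⊆ A)).filter (fun A => e ∈ A),
          μ A * ((∏ f ∈ T, s f) * ∏ f ∈ A \ T, (1 - s f)) =
          ∑ B ∈ F, (1 - s e) * μ (insert e B) * (P * w B) := by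
        refine sum_nbij' (fun A => A.erase e) (fun B => insert e B) ?_ ?_ ?_ ?_ ?_
        · intro A hA
          simp only [filter_filter, mem_filter, mem_univ, true_and] at hA
          simp only [hF, mem_filter, mem_univ, true_and]
          constructor
          · intro x hx
            exact mem_erase.mpr ⟨fun h => heT (h ▸ hx), hA.1 hx⟩
          · simp
        · intro B hB
          simp only [hF, mem_filter, mem_univ, true_and] at hB
          simp only [filter_filter, mem_filter, mem_univ, true_and]
          exact ⟨subset_trans hB.1 (subset_insert _ _), mem_insert_self _ _⟩
        · intro A hA
          simp only [filter_filter, mem_filter, mem_univ, true_and] at hA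
          exact insert_erase hA.2
        · intro B hB
          simp only [hF, mem_filter, mem_univ, true_and] at hB
          exact erase_insert hB.2
        · intro A hA
          simp only [filter_filter, mem_filter, mem_univ, true_and] at hA
          have heA : e ∈ A := hA.2
          have h1 : insert e (A.erase e) = A := insert_erase heA
          have h2 : A \ T = insert e ((A.erase e) \ T) := by
            ext x
            simp only [mem_sdiff, mem_insert, mem_erase]
            constructor
            · intro ⟨hxA, hxT⟩
              by_cases hx : x = e
              · exact Or.inl hx
              · exact Or.inr ⟨⟨hx, hxA⟩, hxT⟩
            · rintro (h | ⟨⟨_, hxA⟩, hxT⟩)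
              · exact ⟨h ▸ heA, fun hh => heT (h ▸ hh)⟩
              · exact ⟨hxA, hxT⟩
          have h3 : e ∉ (A.erase e) \ T := fun h => (mem_erase.mp (mem_sdiff.mp h).1).1 rfl
          rw [h2, prod_insert h3, h1]
          simp only [hw]
          ring
      rw [hpart1, hpart2, ← sum_add_distrib]
      refine sum_congr rfl (fun B _ => ?_)
      ring
    set X : ℝ := ∑ B ∈ F, μ (insert e B) * w B with hX
    set Y : ℝ := ∑ B ∈ F, (μ B + μ (insert e B)) * w B with hY
    have hnum : ν (insert e T) = s e * (P * X) := by
      rw [hν1, hX, mul_sum, mul_sum]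
      refine sum_congr rfl (fun B _ => ?_)
      ring
    have hden : ν T + ν (insert e T) = P * Y := by
      rw [hν1, hν2, hY, ← sum_add_distrib, mul_sum]
      refine sum_congr rfl (fun B _ => ?_)
      ring
    have hXY : X ≤ q e * Y := by
      rw [hX, hY, mul_sum]
      refine sum_le_sum (fun B hB => ?_)
      simp only [hF, mem_filter, mem_univ, true_and] at hB
      have heB : e ∉ B := hB.2
      by_cases hμ : 0 < μ B + μ (insert e B)
      · have := hcap e B heB hμ
        have h1 : μ (insert e B) ≤ q e * (μ B + μ (insert e B)) := by
          rw [div_le_iff₀ hμ] at this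
          linarith
        calc μ (insert e B) * w B ≤ (q e * (μ B + μ (insert e B))) * w B :=
              mul_le_mul_of_nonneg_right h1 (hwpos B)
          _ = q e * ((μ B + μ (insert e B)) * w B) := by ring
      · push_neg at hμ
        have h1 : μ (insert e B) = 0 := le_antisymm (by linarith [h0 B]) (h0 (insert e B))
        have h2 : μ B = 0 := le_antisymm (by linarith [h0 (insert e B)]) (h0 B)
        rw [h1, h2]
        simp
    rw [div_le_iff₀ hpos, hden, hnum]
    calc s e * (P * X) ≤ s e * (P * (q e * Y)) := by
          refine mul_le_mul_of_nonneg_left (mul_le_mul_of_nonneg_left hXY hPpos) hse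
      _ = s e * q e * (P * Y) := by ring
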